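/- Let K be a linearly ordered field, P ∈ K[X] a polynomial of degree d ≥ 1, and σ₀, σ₁, …, σ_d ∈ {−1,+1}. Let a, b, x ∈ K with a < x < b. Assume σ_k · P^[k](a) ≥ 0 and σ_k · P^[k](b) ≥ 0 for all k = 0,…,d−1, and σ_d · c_d > 0, where c_d is the leading coefficient of P. Then σ₀ · P(x) > 0. -/

import Mathlib

open Polynomial

namespace ThomAux

variable {K : Type*} [Field K] [LinearOrder K] [IsStrictOrderedRing K]

/-- quotient of `P` by `X - y`. -/
noncomputable def q (y : K) (P : K[X]) : K[X] := P /ₘ (X - C y)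

lemma q_spec (y : K) (P : K[X]) : P = C (P.eval y) + (X - C y) * q y P := by
  have h := Polynomial.modByMonic_add_div P (X - C y)
  rw [Polynomial.modByMonic_X_sub_C_eq_C_eval] at h
  exact h.symm

lemma q_eval (y u : K) (P : K[X]) :
    P.eval u = P.eval y + (u - y) * (q y P).eval u := by
  conv_lhs => rw [q_spec y P]
  simp only [eval_add, eval_mul, eval_sub, eval_X, eval_C]

lemma q_eval_symm (y w : K) (P : K[X]) : (q y P).eval w = (q w P).eval y := by
  rcases eq_or_ne y w with rfl | hyw
  · rfl
  have h1 := q_eval y w P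
  have h2 := q_eval w y P
  have hwy : w - y ≠ 0 := sub_ne_zero.mpr (Ne.symm hyw)
  apply mul_left_cancel₀ hwy
  nlinarith [h1, h2]

lemma q_comm (y w : K) (P : K[X]) : q w (q y P) = q y (q w P) := by
  rcases eq_or_ne y w with rfl | hyw
  · rfl
  have hK : (X - C y) * (X - C w) ≠ 0 :=
    mul_ne_zero (Polynomial.X_sub_C_ne_zero y) (Polynomial.X_sub_C_ne_zero w)
  apply mul_left_cancel₀ hK
  have h1 := q_spec y P
  have h2 := q_spec w (q y P)
  have h1' := q_spec w P
  have h2' := q_spec y (q w P)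
  have hv : (q y P).eval w = (q w P).eval y := q_eval_symm y w P
  have hval : C ((w - y) * (q y P).eval w) = C (P.eval w - P.eval y) := by
    congr 1
    have := q_eval y w P
    linarith
  -- (X-Cy)(X-Cw) * q w (q y P) = P - C (P.eval y) - (X - C y) * C ((q y P).eval w)
  have e1 : (X - C y) * (X - C w) * q w (q y P)
      = P - C (P.eval y) - (X - C y) * C ((q y P).eval w) := by
    linear_combination (-1 : K[X]) * h1 - (X - C y) * h2
  have e2 : (X - C y) * (X - C w) * q y (q w P)
      = P - C (P.eval w) - (X - C w) * C ((q w P).eval y) := by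
    linear_combination (-1 : K[X]) * h1' - (X - C w) * h2'
  rw [e1, e2, ← hv]
  have hC : (C w - C y) * C ((q y P).eval w) = C (P.eval w) - C (P.eval y) := by
    rw [← C_sub, ← C_mul, ← C_sub]
    exact hval
  linear_combination (-1 : K[X]) * hC

/-- Hermite divided difference along a list of nodes. -/
noncomputable def dd : List K → K[X] → K
  | [], _ => 0
  | [y], P => P.eval y
  | y :: z :: L, P => dd (z :: L) (q y P)

lemma dd_cons (y : K) (L : List K) (h : L ≠ []) (P : K[X]) :
    dd (y :: L) P = dd L (q y P) := by
  cases L with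
  | nil => exact absurd rfl h
  | cons z T => rfl

lemma dd_perm {L L' : List K} (h : L.Perm L') : ∀ P : K[X], dd L P = dd L' P := by
  induction h with
  | nil => intro P; rfl
  | @cons y l₁ l₂ hp ih =>
    intro P
    cases l₁ with
    | nil =>
      have : l₂ = [] := List.Perm.eq_nil hp.symm
      subst this; rfl
    | cons z T =>
      have hl₂ : l₂ ≠ [] := by
        intro he; subst he
        have := hp.length_eq; simp at this
      obtain ⟨w, T', rfl⟩ : ∃ w T', l₂ = w :: T' := by
        cases l₂ with
        | nil => exact absurd rfl hl₂
        | cons w T' => exact ⟨w, T', rfl⟩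
      rw [dd_cons y _ (by simp) P, dd_cons y _ (by simp) P, ih]
  | swap u v l =>
    intro P
    cases l with
    | nil => exact q_eval_symm v u P
    | cons z T =>
      show dd (z :: T) (q u (q v P)) = dd (z :: T) (q v (q u P))
      rw [q_comm]
  | trans h1 h2 ih1 ih2 => intro P; rw [ih1, ih2]

lemma dd_append (T : List K) (u w : K) (P : K[X]) :
    dd (T ++ [u]) P = dd (T ++ [w]) P + (u - w) * dd (T ++ [w, u]) P := by
  induction T generalizing P with
  | nil =>
    show P.eval u = P.eval w + (u - w) * (q w P).eval u
    exact q_eval w u P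
  | cons y T ih =>
    rw [List.cons_append, List.cons_append, List.cons_append,
      dd_cons y _ (by simp) P, dd_cons y _ (by simp) P, dd_cons y _ (by simp) P]
    exact ih (q y P)

lemma hasse_q (y : K) (k : ℕ) (P : K[X]) :
    (P.hasseDeriv (k + 1)).eval y = ((q y P).hasseDeriv k).eval y := by
  have h1 : (Polynomial.taylor y P).coeff (k + 1)
      = (Polynomial.taylor y (q y P)).coeff k := by
    conv_lhs => rw [q_spec y P]
    rw [map_add, Polynomial.taylor_mul, map_sub, Polynomial.taylor_X, Polynomial.taylor_C,
      Polynomial.taylor_C, add_sub_cancel_right]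
    simp [Polynomial.coeff_add, Polynomial.coeff_C, Polynomial.coeff_X_mul]
  rw [← Polynomial.taylor_coeff, ← Polynomial.taylor_coeff]
  exact h1

lemma dd_replicate (k : ℕ) (y : K) : ∀ P : K[X],
    dd (List.replicate (k + 1) y) P = (P.hasseDeriv k).eval y := by
  induction k with
  | zero =>
    intro P
    rw [List.replicate_one]
    show P.eval y = _
    simp [Polynomial.hasseDeriv_zero]
  | succ k ih =>
    intro P
    rw [List.replicate_succ, dd_cons y _ (by simp) P, ih (q y P)]
    exact (hasse_q y k P).symm

lemma q_natDegree (y : K) (P : K[X]) : (q y P).natDegree = P.natDegree - 1 := by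
  rw [q, Polynomial.natDegree_divByMonic P (Polynomial.monic_X_sub_C y),
    Polynomial.natDegree_X_sub_C]

lemma q_leadingCoeff (y : K) {P : K[X]} (h1 : 1 ≤ P.natDegree) :
    (q y P).leadingCoeff = P.leadingCoeff := by
  obtain ⟨m, hPm⟩ : ∃ m, P.natDegree = m + 1 := ⟨P.natDegree - 1, by omega⟩
  have hdeg : (q y P).natDegree = m := by rw [q_natDegree, hPm]; omega
  have hz : (q y P).coeff (m + 1) = 0 :=
    Polynomial.coeff_eq_zero_of_natDegree_lt (by rw [hdeg]; exact Nat.lt_succ_self m)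
  have hcoeff : P.coeff (m + 1) = (q y P).coeff m := by
    conv_lhs => rw [q_spec y P]
    rw [Polynomial.coeff_add, Polynomial.coeff_C, sub_mul, Polynomial.coeff_sub,
      Polynomial.coeff_X_mul, Polynomial.coeff_C_mul, hz]
    simp
  show (q y P).coeff (q y P).natDegree = P.coeff P.natDegree
  rw [hdeg, hPm, hcoeff]

lemma dd_leadingCoeff : ∀ (L : List K) (P : K[X]),
    L.length = P.natDegree + 1 → dd L P = P.leadingCoeff := by
  intro L
  induction L with
  | nil => intro P h; simp at h
  | cons y L ih =>
    intro P h
    cases L with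
    | nil =>
      have h0 : P.natDegree = 0 := by simpa using h.symm
      have hP := Polynomial.eq_C_of_natDegree_eq_zero h0
      show P.eval y = P.leadingCoeff
      rw [hP]; simp
    | cons z T =>
      have hlen : (z :: T).length = P.natDegree := by
        have := h; simp only [List.length_cons] at this ⊢; omega
      have h1 : 1 ≤ P.natDegree := by
        rw [← hlen]; simp
      rw [dd_cons y _ (by simp) P, ih (q y P) (by rw [q_natDegree]; omega),
        q_leadingCoeff y h1]

/-- canonical node list with `i` copies of `a`, `k` copies of `x`, `j` copies of `b`. -/
def LL (a x b : K) (i k j : ℕ) : List K :=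
  List.replicate i a ++ (List.replicate k x ++ List.replicate j b)

lemma LL_length (a x b : K) (i k j : ℕ) : (LL a x b i k j).length = i + k + j := by
  simp [LL]; omega

lemma perm_a (a x b : K) (i k j : ℕ) :
    (LL a x b i k j ++ [a]).Perm (LL a x b (i + 1) k j) := by
  have h2 : [a] ++ LL a x b i k j = LL a x b (i + 1) k j := by
    simp [LL, List.replicate_succ]
  exact List.perm_append_comm.trans (h2 ▸ List.Perm.refl _)

lemma perm_x (a x b : K) (i k j : ℕ) :
    (LL a x b i k j ++ [x]).Perm (LL a x b i (k + 1) j) := by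
  have h1 : (LL a x b i k j ++ [x]).Perm (x :: LL a x b i k j) := List.perm_append_comm
  have h2 : (x :: (List.replicate i a ++ (List.replicate k x ++ List.replicate j b))).Perm
      (List.replicate i a ++ x :: (List.replicate k x ++ List.replicate j b)) :=
    List.perm_middle.symm
  have h3 : List.replicate i a ++ x :: (List.replicate k x ++ List.replicate j b)
      = LL a x b i (k + 1) j := by
    simp [LL, List.replicate_succ]
  exact h1.trans (h2.trans (h3 ▸ List.Perm.refl _))

lemma perm_b (a x b : K) (i k j : ℕ) :
    (LL a x b i k j ++ [b]).Perm (LL a x b i k (j + 1)) := by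
  have h : LL a x b i k j ++ [b] = LL a x b i k (j + 1) := by
    simp [LL, List.replicate_succ', List.append_assoc]
  exact h ▸ List.Perm.refl _

lemma perm_pair (a x b : K) (i k j : ℕ) {w u : K} {L1 L2 : List K}
    (hw : (LL a x b i k j ++ [w]).Perm L1) (hu : (L1 ++ [u]).Perm L2) :
    (LL a x b i k j ++ [w, u]).Perm L2 := by
  have he : LL a x b i k j ++ [w, u] = (LL a x b i k j ++ [w]) ++ [u] := by
    rw [List.append_assoc]; rfl
  exact he ▸ ((hw.append_right [u]).trans hu)

lemma red_xa (a x b : K) (P : K[X]) (i k j : ℕ) :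
    dd (LL a x b i (k + 1) j) P
      = dd (LL a x b (i + 1) k j) P + (x - a) * dd (LL a x b (i + 1) (k + 1) j) P := by
  have h := dd_append (LL a x b i k j) x a P
  rw [dd_perm (perm_x a x b i k j) P, dd_perm (perm_a a x b i k j) P,
    dd_perm (perm_pair a x b i k j (perm_a a x b i k j) (perm_x a x b (i + 1) k j)) P] at h
  exact h

lemma red_xb (a x b : K) (P : K[X]) (i k j : ℕ) :
    dd (LL a x b i (k + 1) j) P
      = dd (LL a x b i k (j + 1)) P + (x - b) * dd (LL a x b i (k + 1) (j + 1)) P := by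
  have h := dd_append (LL a x b i k j) x b P
  rw [dd_perm (perm_x a x b i k j) P, dd_perm (perm_b a x b i k j) P,
    dd_perm (perm_pair a x b i k j (perm_b a x b i k j) (perm_x a x b i k (j + 1))) P] at h
  exact h

lemma red_ba (a x b : K) (P : K[X]) (i k j : ℕ) :
    dd (LL a x b i k (j + 1)) P
      = dd (LL a x b (i + 1) k j) P + (b - a) * dd (LL a x b (i + 1) k (j + 1)) P := by
  have h := dd_append (LL a x b i k j) b a P
  rw [dd_perm (perm_b a x b i k j) P, dd_perm (perm_a a x b i k j) P,
    dd_perm (perm_pair a x b i k j (perm_a a x b i k j) (perm_b a x b (i + 1) k j)) P] at h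
  exact h

lemma red_ab (a x b : K) (P : K[X]) (i k j : ℕ) :
    dd (LL a x b (i + 1) k j) P
      = dd (LL a x b i k (j + 1)) P + (a - b) * dd (LL a x b (i + 1) k (j + 1)) P := by
  have h := red_ba a x b P i k j
  linear_combination -h

end ThomAux

open ThomAux in
/-- **Thom's lemma consequence certified by generalized Taylor formulae.**
If `P` has degree `d ≥ 1`, the signs `σ_k P^[k]` are `≥ 0` at both `a` and `b` for
`k = 0,…,d−1`, and `σ_d · (leading coefficient) > 0`, then `σ₀ · P(x) > 0` for
every `x` strictly between `a` and `b`. Here `P^[k]` is the `k`-th Hasse derivative. -/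
theorem sign_on_thom_interval {K : Type*} [Field K] [LinearOrder K] [IsStrictOrderedRing K]
    (P : Polynomial K) (d : ℕ) (hd : 1 ≤ d) (hdeg : P.natDegree = d)
    (σ : ℕ → ℤ) (hσ : ∀ k, k ≤ d → σ k = 1 ∨ σ k = -1)
    (a b x : K) (hax : a < x) (hxb : x < b)
    (ha : ∀ k, k < d → 0 ≤ (σ k : K) * (Polynomial.hasseDeriv k P).eval a)
    (hb : ∀ k, k < d → 0 ≤ (σ k : K) * (Polynomial.hasseDeriv k P).eval b)
    (hlead : 0 < (σ d : K) * P.leadingCoeff) :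
    0 < (σ 0 : K) * P.eval x := by
  have top : ∀ i k j : ℕ, i + k + j = d + 1 → dd (LL a x b i k j) P = P.leadingCoeff := by
    intro i k j h
    apply dd_leadingCoeff
    rw [LL_length, hdeg, h]
  have base_a : ∀ n : ℕ, dd (LL a x b (n + 1) 0 0) P = (P.hasseDeriv n).eval a := by
    intro n
    have h : LL a x b (n + 1) 0 0 = List.replicate (n + 1) a := by simp [LL]
    rw [h, dd_replicate]
  have base_b : ∀ n : ℕ, dd (LL a x b 0 0 (n + 1)) P = (P.hasseDeriv n).eval b := by
    intro n
    have h : LL a x b 0 0 (n + 1) = List.replicate (n + 1) b := by simp [LL]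
    rw [h, dd_replicate]
  have main : ∀ m : ℕ, m ≤ d → ∀ i k j : ℕ, i + k + j = (d - m) + 1 →
      0 ≤ (σ (d - m) : K) * dd (LL a x b i k j) P ∧
      (1 ≤ k → 0 < (σ (d - m) : K) * dd (LL a x b i k j) P) := by
    intro m
    induction m with
    | zero =>
      intro _ i k j hsum
      simp only [Nat.sub_zero] at hsum ⊢
      rw [top i k j hsum]
      exact ⟨hlead.le, fun _ => hlead⟩
    | succ m ih =>
      intro hm
      have hmd : m ≤ d := by omega
      set n := d - (m + 1) with hn
      have hn1 : d - m = n + 1 := by omega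
      have hnd : n < d := by omega
      have IH : ∀ i k j : ℕ, i + k + j = (n + 1) + 1 →
          0 ≤ (σ (n + 1) : K) * dd (LL a x b i k j) P ∧
          (1 ≤ k → 0 < (σ (n + 1) : K) * dd (LL a x b i k j) P) := by
        intro i k j h
        have h2 := ih hmd i k j
        rw [hn1] at h2
        exact h2 h
      have hba : (0 : K) < b - a := by linarith
      have hxa : (0 : K) < x - a := by linarith
      have hbx : (0 : K) < b - x := by linarith
      have hdicho : ((σ n : K) = (σ (n + 1) : K)) ∨ ((σ n : K) = -(σ (n + 1) : K)) := by
        rcases hσ n hnd.le with h0 | h0 <;> rcases hσ (n + 1) (by omega) with h1 | h1 <;>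
          rw [h0, h1] <;> norm_num
      rcases hdicho with hsame | hopp
      · -- same sign: reduce towards `a`
        have step1 : ∀ j i : ℕ, i + j = n + 1 → 0 ≤ (σ n : K) * dd (LL a x b i 0 j) P := by
          intro j
          induction j with
          | zero =>
            intro i hi
            have hi' : i = n + 1 := by omega
            subst hi'
            rw [base_a n]
            exact ha n hnd
          | succ j ihj =>
            intro i hi
            have h1 := ihj (i + 1) (by omega)
            have h2 := (IH (i + 1) 0 (j + 1) (by omega)).1
            rw [red_ba a x b P i 0 j, hsame]
            rw [hsame] at h1
            nlinarith [mul_nonneg hba.le h2]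
        have step2 : ∀ k i j : ℕ, i + k + j = n + 1 →
            0 ≤ (σ n : K) * dd (LL a x b i k j) P ∧
            (1 ≤ k → 0 < (σ n : K) * dd (LL a x b i k j) P) := by
          intro k
          induction k with
          | zero =>
            intro i j h
            exact ⟨step1 j i (by omega), fun hk => by omega⟩
          | succ k ihk =>
            intro i j h
            have h1 := (ihk (i + 1) j (by omega)).1
            have h2 := (IH (i + 1) (k + 1) j (by omega)).2 (by omega)
            have hpos : 0 < (σ n : K) * dd (LL a x b i (k + 1) j) P := by
              rw [red_xa a x b P i k j, hsame]
              rw [hsame] at h1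
              nlinarith [mul_pos hxa h2]
            exact ⟨hpos.le, fun _ => hpos⟩
        exact fun i k j h => step2 k i j h
      · -- opposite signs: reduce towards `b`
        have step1 : ∀ i j : ℕ, i + j = n + 1 → 0 ≤ (σ n : K) * dd (LL a x b i 0 j) P := by
          intro i
          induction i with
          | zero =>
            intro j hj
            have hj' : j = n + 1 := by omega
            subst hj'
            rw [base_b n]
            exact hb n hnd
          | succ i ihi =>
            intro j hj
            have h1 := ihi (j + 1) (by omega)
            have h2 := (IH (i + 1) 0 (j + 1) (by omega)).1
            rw [red_ab a x b P i 0 j, hopp]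
            rw [hopp] at h1
            nlinarith [mul_nonneg hba.le h2]
        have step2 : ∀ k i j : ℕ, i + k + j = n + 1 →
            0 ≤ (σ n : K) * dd (LL a x b i k j) P ∧
            (1 ≤ k → 0 < (σ n : K) * dd (LL a x b i k j) P) := by
          intro k
          induction k with
          | zero =>
            intro i j h
            exact ⟨step1 i j (by omega), fun hk => by omega⟩
          | succ k ihk =>
            intro i j h
            have h1 := (ihk i (j + 1) (by omega)).1
            have h2 := (IH i (k + 1) (j + 1) (by omega)).2 (by omega)
            have hpos : 0 < (σ n : K) * dd (LL a x b i (k + 1) j) P := by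
              rw [red_xb a x b P i k j, hopp]
              rw [hopp] at h1
              nlinarith [mul_pos hbx h2]
            exact ⟨hpos.le, fun _ => hpos⟩
        exact fun i k j h => step2 k i j h
  have hfin := (main d le_rfl 0 1 0 (by omega)).2 le_rfl
  rw [Nat.sub_self] at hfin
  exact hfin
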